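/- Let W = (ω_1,…,ω_n) be a basis of A with eW′ = MW, and let h = Σ_{i=1}^n (h_i/(de)) ω_i with h_i, d ∈ K[x], gcd(d, e) = 1, gcd(h_1,…,h_n, d) = 1, and d squarefree. If h is integrable in A (i.e., h = H′ for some H ∈ A) and W is a local integral basis at a ∈ K̄, then d has no root at a. -/

import Mathlib

noncomputable section
open scoped Classical

open Polynomial

/-- Termwise derivative (w.r.t. `x`) of a generalized (Hahn/Puiseux) series in `x - a`:
the exponent-`q` coefficient of `P'` is `(q+1)` times the exponent-`(q+1)` coefficient of `P`. -/
def hderiv {F : Type} [Field F] (P : HahnSeries ℚ F) : HahnSeries ℚ F where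
  coeff q := ((q + 1 : ℚ) : F) * P.coeff (q + 1)
  isPWO_support' := by
    have hsub : (Function.support fun q : ℚ => ((q + 1 : ℚ) : F) * P.coeff (q + 1))
        ⊆ (fun q : ℚ => q - 1) '' P.support := by
      intro q hq
      refine ⟨q + 1, ?_, by ring⟩
      intro h0
      simp [Function.mem_support, h0] at hq
    exact (P.isPWO_support.image_of_monotoneOn
      (fun x _ y _ hxy => by simpa using hxy)).mono hsub

/-- The valuation of a generalized (Hahn/Puiseux) series: the least exponent occurring,
and `⊤` for the zero series. -/
def hval {F : Type} [Field F] (P : HahnSeries ℚ F) : WithTop ℚ :=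
  if h : P = 0 then ⊤
  else ((P.isWF_support.min (HahnSeries.support_nonempty_iff.mpr h) : ℚ) : WithTop ℚ)

/-- A series is ramified if some exponent in its support is not an integer. -/
def Ramified {F : Type} [Field F] (P : HahnSeries ℚ F) : Prop :=
  ∃ q ∈ P.support, ∀ z : ℤ, (z : ℚ) ≠ q

/-- The set of fractional (non-integer) exponents occurring in a series. -/
def fracSupport {F : Type} [Field F] (P : HahnSeries ℚ F) : Set ℚ :=
  {q | q ∈ P.support ∧ ∀ z : ℤ, (z : ℚ) ≠ q}

/-- The minimal fractional exponent `δ(P)` of a series; `⊤` if `P` is not ramified. -/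
def delta {F : Type} [Field F] (P : HahnSeries ℚ F) : WithTop ℚ :=
  if h : (fracSupport P).Nonempty then
    (((P.isWF_support.mono (fun q hq => hq.1)).min h : ℚ) : WithTop ℚ)
  else ⊤

/-- A Hahn series over `ℚ` is a Puiseux series if its exponents have a common denominator. -/
def IsPuiseux {F : Type} [Field F] (P : HahnSeries ℚ F) : Prop :=
  ∃ r : ℕ, 0 < r ∧ ∀ q ∈ P.support, ∃ z : ℤ, (z : ℚ) / r = q

/-! ### The algebraic function field `A = K(x)[y]/⟨m⟩` -/

/-- The canonical image in `A = K(x)[y]/⟨m⟩` of a polynomial `p ∈ K[x]`. -/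
def toA {K : Type} [Field K] (m : Polynomial (RatFunc K)) (p : Polynomial K) :
    AdjoinRoot m :=
  algebraMap (RatFunc K) (AdjoinRoot m) (algebraMap (Polynomial K) (RatFunc K) p)

/-- `D` is the derivation on `A = K(x)[y]/⟨m⟩` extending `d/dx` on `K(x)`:
it is additive, satisfies the Leibniz rule, and restricts to `d/dx` on `K[x]`
(hence, being a derivation on a field, on all of `K(x)`). -/
structure IsDerivationOnA {K : Type} [Field K] (m : Polynomial (RatFunc K))
    (D : AdjoinRoot m → AdjoinRoot m) : Prop where
  map_add : ∀ f g, D (f + g) = D f + D g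
  leibniz : ∀ f g, D (f * g) = f * D g + g * D f
  map_poly : ∀ p : Polynomial K, D (toA m p) = toA m (Polynomial.derivative p)

/-- `W` is a basis of `A` as a vector space over `K(x)`. -/
def IsKxBasis {K : Type} [Field K] {m : Polynomial (RatFunc K)}
    (W : Fin m.natDegree → AdjoinRoot m) : Prop :=
  LinearIndependent (RatFunc K) W ∧ Submodule.span (RatFunc K) (Set.range W) = ⊤

/-- `e W′ = M W` componentwise. -/
def DerivRel {K : Type} [Field K] {m : Polynomial (RatFunc K)}
    (D : AdjoinRoot m → AdjoinRoot m) (W : Fin m.natDegree → AdjoinRoot m)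
    (e : Polynomial K) (M : Matrix (Fin m.natDegree) (Fin m.natDegree) (Polynomial K)) : Prop :=
  ∀ i, toA m e * D (W i) = ∑ j, toA m (M i j) * W j

/-- `gcd(e, m₁₁, …, mₙₙ) = 1`: the only common divisors of `e` and the entries of `M`
are units. -/
def GcdOne {K : Type} [Field K] {n : ℕ}
    (e : Polynomial K) (M : Matrix (Fin n) (Fin n) (Polynomial K)) : Prop :=
  ∀ p : Polynomial K, p ∣ e → (∀ i j, p ∣ M i j) → IsUnit p

/-! ### Puiseux expansions around a point `a` of the algebraic closure -/

/-- The family of the `n` distinct `K(x)`-embeddings of `A = K(x)[y]/⟨m⟩` into the field of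
Puiseux series around a point `a`: each embedding is a ring homomorphism into the Hahn series
field whose values are Puiseux series, sending constants `c ∈ K` to constant series and the
rational function `x` to `a + (x - a)`, i.e. to the series `a + t` where `t` stands
for `x - a`. -/
structure EmbFamily (K F : Type) [Field K] [Field F] [Algebra K F]
    (m : Polynomial (RatFunc K)) (a : F) where
  emb : Fin m.natDegree → (AdjoinRoot m →+* HahnSeries ℚ F)
  emb_injective : Function.Injective emb
  emb_C : ∀ i (c : K), emb i (toA m (Polynomial.C c)) = HahnSeries.single 0 (algebraMap K F c)
  emb_X : ∀ i, emb i (toA m Polynomial.X) =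
    HahnSeries.single 0 a + HahnSeries.single 1 1
  emb_puiseux : ∀ i f, IsPuiseux (emb i f)

/-- The embeddings around `a` are differential homomorphisms: they intertwine the derivation
`D` on `A` with the termwise derivative of series. -/
def IsDiffFamily {K F : Type} [Field K] [Field F] [Algebra K F]
    {m : Polynomial (RatFunc K)} {a : F} (D : AdjoinRoot m → AdjoinRoot m)
    (σ : EmbFamily K F m a) : Prop :=
  ∀ i f, σ.emb i (D f) = hderiv (σ.emb i f)

/-- `f ∈ A` is locally integral at `a`, i.e. `val_a(f) ≥ 0`: all Puiseux series associated
to `f` around `a` have nonnegative valuation. -/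
def LocIntegralAt {K F : Type} [Field K] [Field F] [Algebra K F]
    {m : Polynomial (RatFunc K)} {a : F} (σ : EmbFamily K F m a)
    (f : AdjoinRoot m) : Prop :=
  ∀ i, 0 ≤ hval (σ.emb i f)

/-- `a` is a branch point of `f ∈ A`: one of the Puiseux series associated to `f` around `a`
is ramified. -/
def IsBranchPointOf {K F : Type} [Field K] [Field F] [Algebra K F]
    {m : Polynomial (RatFunc K)} {a : F} (σ : EmbFamily K F m a)
    (f : AdjoinRoot m) : Prop :=
  ∃ i, Ramified (σ.emb i f)

/-- `f ∈ A` is (globally) integral: locally integral at every point `a` of the algebraic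
closure of `K` (given the system `σ` of Puiseux expansions around each point). -/
def IntegralElem {K : Type} [Field K] {m : Polynomial (RatFunc K)}
    (σ : ∀ a : AlgebraicClosure K, EmbFamily K (AlgebraicClosure K) m a)
    (f : AdjoinRoot m) : Prop :=
  ∀ a, LocIntegralAt (σ a) f

/-- `W` is an integral basis of `A`: a `K(x)`-vector-space basis consisting of integral
elements such that every integral element is a `K[x]`-linear combination of `W`. -/
def IsIntegralBasis {K : Type} [Field K] {m : Polynomial (RatFunc K)}
    (σ : ∀ a : AlgebraicClosure K, EmbFamily K (AlgebraicClosure K) m a)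
    (W : Fin m.natDegree → AdjoinRoot m) : Prop :=
  IsKxBasis W ∧ (∀ i, IntegralElem σ (W i)) ∧
    ∀ f, IntegralElem σ f → ∃ c : Fin m.natDegree → Polynomial K,
      f = ∑ i, toA m (c i) * W i

/-- The rational function `r ∈ K(x)` has no pole at `a`: `r = p/q` with `q(a) ≠ 0`. -/
def NoPoleAt {K F : Type} [Field K] [Field F] [Algebra K F] (a : F) (r : RatFunc K) : Prop :=
  ∃ p q : Polynomial K, Polynomial.aeval a q ≠ 0 ∧
    r * algebraMap (Polynomial K) (RatFunc K) q = algebraMap (Polynomial K) (RatFunc K) p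

/-- `W` is a local integral basis of `A` at `a`: a `K(x)`-vector-space basis consisting of
elements that are locally integral at `a`, such that every element of `A` that is locally
integral at `a` is a linear combination of `W` with coefficients in `K(x)_a` (rational
functions without a pole at `a`). -/
def IsLocalIntegralBasisAt {K F : Type} [Field K] [Field F] [Algebra K F]
    {m : Polynomial (RatFunc K)} {a : F} (σ : EmbFamily K F m a)
    (W : Fin m.natDegree → AdjoinRoot m) : Prop :=
  IsKxBasis W ∧ (∀ i, LocIntegralAt σ (W i)) ∧
    ∀ f, LocIntegralAt σ f → ∃ c : Fin m.natDegree → RatFunc K,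
      (∀ i, NoPoleAt a (c i)) ∧ f = ∑ i, algebraMap (RatFunc K) (AdjoinRoot m) (c i) * W i


/-! ### Auxiliary lemmas for Statement 5 -/

private lemma key_induction {L : Type} [Field L] [CharZero L] {n : ℕ} (a : L)
    (Hc : Fin n → Polynomial L) (Mm : Fin n → Fin n → Polynomial L) (d₁ EE : Polynomial L)
    (hd₁ : d₁.eval a ≠ 0) (hE : EE.eval a ≠ 0) (j₀ : Fin n) (hj₀ : (Hc j₀).eval a ≠ 0) :
    ∀ β : ℕ, ∀ (P : Fin n → Polynomial L) (Q : Polynomial L), Q ≠ 0 →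
      Polynomial.rootMultiplicity a Q = β → Q.eval a = 0 →
      (∀ j, Q ^ 2 * Hc j =
        ((X - C a) * d₁) * EE * (derivative (P j) * Q - P j * derivative Q)
          + ((X - C a) * d₁) * Q * ∑ i, P i * Mm i j) → False := by
  intro β
  induction β using Nat.strong_induction_on with
  | _ β IH =>
    intro P Q hQ0 hβ hQa hid
    by_cases hP : ∃ j, (P j).eval a ≠ 0
    · -- Step A: some `P j` does not vanish at `a`; direct contradiction.
      obtain ⟨j, hPj⟩ := hP
      obtain ⟨b, hb⟩ : ∃ b, β = b + 1 := by
        have : 0 < β := hβ ▸ (Polynomial.rootMultiplicity_pos hQ0).mpr hQa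
        exact ⟨β - 1, by omega⟩
      obtain ⟨q₁, hq1, hndvd⟩ := Q.exists_eq_pow_rootMultiplicity_mul_and_not_dvd hQ0 a
      rw [hβ, hb] at hq1
      have hq₁a : q₁.eval a ≠ 0 := fun hz => hndvd (Polynomial.dvd_iff_isRoot.mpr hz)
      have hQ' : derivative Q = C ((b : L) + 1) * ((X - C a) ^ b * q₁)
          + (X - C a) ^ (b + 1) * derivative q₁ := by
        rw [hq1, derivative_mul, derivative_pow_succ, derivative_X_sub_C]
        push_cast
        ring
      set B : Polynomial L := (X - C a) * derivative (P j) * q₁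
          - C ((b : L) + 1) * (P j) * q₁ - (X - C a) * (P j) * derivative q₁ with hB
      have hkey : (X - C a) ^ (b + 1) * (d₁ * EE * B) =
          (X - C a) ^ (b + 1) *
            ((X - C a) * ((X - C a) ^ b * q₁ ^ 2 * Hc j
              - d₁ * q₁ * ∑ i, P i * Mm i j)) := by
        have h1 := hid j
        rw [hQ', hq1] at h1
        rw [hB]
        linear_combination -h1
      have hcan : d₁ * EE * B =
          (X - C a) * ((X - C a) ^ b * q₁ ^ 2 * Hc j
            - d₁ * q₁ * ∑ i, P i * Mm i j) :=
        mul_left_cancel₀ (pow_ne_zero _ (Polynomial.X_sub_C_ne_zero a)) hkey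
      have hb1 : ((b : L) + 1) ≠ 0 := by
        exact_mod_cast (Nat.cast_ne_zero (R := L)).mpr (Nat.succ_ne_zero b)
      have hBa : B.eval a = -(((b : L) + 1) * (P j).eval a * q₁.eval a) := by
        simp only [hB, Polynomial.eval_mul, Polynomial.eval_sub, Polynomial.eval_add,
          Polynomial.eval_X, Polynomial.eval_C, sub_self, zero_mul]
        ring
      have h0 : d₁.eval a * EE.eval a * B.eval a = 0 := by
        have := congrArg (Polynomial.eval a) hcan
        simpa using this
      rw [hBa] at h0
      exact mul_ne_zero (mul_ne_zero hd₁ hE)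
        (neg_ne_zero.mpr (mul_ne_zero (mul_ne_zero hb1 hPj) hq₁a)) h0
    · -- Step B: all `P j` vanish at `a`; divide by `(X - C a)²` and recurse.
      push_neg at hP
      have hdvdP : ∀ j, ∃ r, P j = (X - C a) * r := fun j =>
        Polynomial.dvd_iff_isRoot.mpr (hP j)
      choose R hR using hdvdP
      obtain ⟨S, hS⟩ : ∃ s, Q = (X - C a) * s := Polynomial.dvd_iff_isRoot.mpr hQa
      have hS0 : S ≠ 0 := by
        rintro rfl
        exact hQ0 (by simpa using hS)
      have hβpos : 0 < β := hβ ▸ (Polynomial.rootMultiplicity_pos hQ0).mpr hQa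
      have hmultS : Polynomial.rootMultiplicity a S = β - 1 := by
        have hprod : (X - C a) * S ≠ 0 := hS ▸ hQ0
        have := Polynomial.rootMultiplicity_mul (x := a) hprod
        rw [← hS, hβ, Polynomial.rootMultiplicity_X_sub_C_self] at this
        omega
      have hsum : ∀ j, (∑ i, P i * Mm i j) = (X - C a) * ∑ i, R i * Mm i j := by
        intro j
        rw [Finset.mul_sum]
        exact Finset.sum_congr rfl fun i _ => by rw [hR i]; ring
      have hid' : ∀ j, S ^ 2 * Hc j =
          ((X - C a) * d₁) * EE * (derivative (R j) * S - R j * derivative S)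
            + ((X - C a) * d₁) * S * ∑ i, R i * Mm i j := by
        intro j
        have h1 := hid j
        rw [hS, hR j, hsum j] at h1
        have hder : derivative ((X - C a) * R j) = R j + (X - C a) * derivative (R j) := by
          rw [derivative_mul, derivative_X_sub_C]; ring
        have hderS : derivative ((X - C a) * S) = S + (X - C a) * derivative S := by
          rw [derivative_mul, derivative_X_sub_C]; ring
        rw [hder, hderS] at h1
        have h2 : (X - C a) ^ 2 * (S ^ 2 * Hc j) =
            (X - C a) ^ 2 * (((X - C a) * d₁) * EE *
              (derivative (R j) * S - R j * derivative S)
              + ((X - C a) * d₁) * S * ∑ i, R i * Mm i j) := by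
          linear_combination h1
        exact mul_left_cancel₀ (pow_ne_zero _ (Polynomial.X_sub_C_ne_zero a)) h2
      have hSa : S.eval a = 0 := by
        have h1 := congrArg (Polynomial.eval a) (hid' j₀)
        simp only [Polynomial.eval_mul, Polynomial.eval_sub, Polynomial.eval_add,
          Polynomial.eval_pow, Polynomial.eval_X, Polynomial.eval_C, sub_self, zero_mul] at h1
        rw [add_zero] at h1
        have := mul_eq_zero.mp h1
        rcases this with h' | h'
        · exact pow_eq_zero_iff (n := 2) (by norm_num) |>.mp h'
        · exact absurd h' hj₀
      exact IH (β - 1) (by omega) R S hS0 hmultS hSa hid'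

private lemma deriv_sum_eq {K : Type} [Field K] {m : Polynomial (RatFunc K)}
    {D : AdjoinRoot m → AdjoinRoot m} (hD : IsDerivationOnA m D)
    {ι : Type} (s : Finset ι) (g : ι → AdjoinRoot m) :
    D (∑ i ∈ s, g i) = ∑ i ∈ s, D (g i) := by
  have hzero : D 0 = 0 := by
    have := hD.map_add 0 0
    simpa using this.symm
  classical
  induction s using Finset.induction_on with
  | empty => simpa using hzero
  | insert _ _ hni ih =>
    rw [Finset.sum_insert hni, Finset.sum_insert hni, hD.map_add, ih]

/-- Let `W = (ω₁,…,ωₙ)` be a basis of `A` with `eW′ = MW`, and let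
`h = Σ (h_i/(de)) ω_i` with `h_i, d ∈ K[x]`, `gcd(d, e) = 1`, `gcd(h₁,…,hₙ, d) = 1`, and `d`
squarefree. If `h` is integrable in `A` (i.e. `h = H′` for some `H ∈ A`) and `W` is a local
integral basis at `a ∈ K̄`, then `d` has no root at `a`. -/
theorem no_root_of_d_of_integrable_local {K : Type} [Field K] [CharZero K]
    (m : Polynomial (RatFunc K)) [Fact (Irreducible m)]
    (D : AdjoinRoot m → AdjoinRoot m) (hD : IsDerivationOnA m D)
    (W : Fin m.natDegree → AdjoinRoot m)
    (e : Polynomial K) (M : Matrix (Fin m.natDegree) (Fin m.natDegree) (Polynomial K))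
    (hrel : DerivRel D W e M) (hgcd : GcdOne e M)
    (h : AdjoinRoot m) (hc : Fin m.natDegree → Polynomial K) (d : Polynomial K)
    (hd0 : d ≠ 0) (he0 : e ≠ 0)
    -- `h = Σ (h_i/(de)) ω_i`:
    (hrep : toA m d * toA m e * h = ∑ i, toA m (hc i) * W i)
    (hde : IsCoprime d e)
    (hhd : ∀ p : Polynomial K, p ∣ d → (∀ i, p ∣ hc i) → IsUnit p)
    (hdsqf : Squarefree d)
    -- `h` is integrable in `A`:
    (hint : ∃ H : AdjoinRoot m, h = D H)
    -- `W` is a local integral basis at `a`: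
    (a : AlgebraicClosure K) (σa : EmbFamily K (AlgebraicClosure K) m a)
    (hσa : IsDiffFamily D σa)
    (hWloc : IsLocalIntegralBasisAt σa W) :
    Polynomial.aeval a d ≠ 0 := by
  intro hda
  classical
  obtain ⟨H, hH⟩ := hint
  obtain ⟨⟨hli, hspan⟩, -, -⟩ := hWloc
  -- expand `H` in the basis `W`
  have hmem : H ∈ Submodule.span (RatFunc K) (Set.range W) := by rw [hspan]; trivial
  obtain ⟨f, hf⟩ := (Submodule.mem_span_range_iff_exists_fun (RatFunc K)).mp hmem
  -- clear denominators
  obtain ⟨bq, hbq⟩ := IsLocalization.exist_integer_multiples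
    (nonZeroDivisors (Polynomial K)) Finset.univ f
  have hq0 : (bq : Polynomial K) ≠ 0 := nonZeroDivisors.coe_ne_zero bq
  set q : Polynomial K := (bq : Polynomial K) with hqdef
  have hpex : ∀ i : Fin m.natDegree, ∃ pp : Polynomial K,
      algebraMap (Polynomial K) (RatFunc K) pp
        = algebraMap (Polynomial K) (RatFunc K) q * f i := by
    intro i
    obtain ⟨pp, hpp⟩ := hbq i (Finset.mem_univ i)
    exact ⟨pp, by rw [hpp, Algebra.smul_def]⟩
  choose p hp using hpex
  -- basic facts about `toA`
  have toA_smul : ∀ (c : Polynomial K) (w : AdjoinRoot m),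
      toA m c * w = (algebraMap (Polynomial K) (RatFunc K) c) • w := by
    intro c w
    rw [Algebra.smul_def]
    rfl
  have E1 : toA m q * H = ∑ i, toA m (p i) * W i := by
    rw [← hf, Finset.mul_sum]
    refine Finset.sum_congr rfl fun i _ => ?_
    rw [toA_smul, toA_smul, hp i, mul_smul]
  have E2 : toA m q * h + H * toA m (derivative q) =
      ∑ i, (toA m (p i) * D (W i) + W i * toA m (derivative (p i))) :=
    calc toA m q * h + H * toA m (derivative q)
        = toA m q * D H + H * D (toA m q) := by rw [hH, hD.map_poly]
      _ = D (toA m q * H) := (hD.leibniz _ _).symm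
      _ = D (∑ i, toA m (p i) * W i) := by rw [E1]
      _ = ∑ i, D (toA m (p i) * W i) := deriv_sum_eq hD _ _
      _ = ∑ i, (toA m (p i) * D (W i) + W i * toA m (derivative (p i))) := by
          refine Finset.sum_congr rfl fun i _ => ?_
          rw [hD.leibniz, hD.map_poly]
  -- the key sum identity in `A`
  have E3 : ∑ j, toA m (q * q * hc j + d * e * derivative q * p j) * W j
      = ∑ j, toA m (d * q * (∑ i, p i * M i j) + d * e * q * derivative (p j)) * W j :=
    calc ∑ j, toA m (q * q * hc j + d * e * derivative q * p j) * W j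
        = toA m q * toA m q * (∑ j, toA m (hc j) * W j)
          + toA m d * toA m e * toA m (derivative q) * (∑ j, toA m (p j) * W j) := by
          rw [Finset.mul_sum, Finset.mul_sum, ← Finset.sum_add_distrib]
          refine Finset.sum_congr rfl fun j _ => ?_
          simp only [toA, map_add, map_mul]
          ring
      _ = toA m d * toA m e * toA m q * (toA m q * h + H * toA m (derivative q)) := by
          rw [← hrep, ← E1]; ring
      _ = toA m d * toA m e * toA m q *
            (∑ i, (toA m (p i) * D (W i) + W i * toA m (derivative (p i)))) := by rw [E2]
      _ = ∑ i, (toA m d * toA m q * toA m (p i) * (toA m e * D (W i))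
            + toA m (d * e * q * derivative (p i)) * W i) := by
          rw [Finset.mul_sum]
          refine Finset.sum_congr rfl fun i _ => ?_
          simp only [toA, map_mul]
          ring
      _ = ∑ i, ((∑ j, toA m (d * q * (p i * M i j)) * W j)
            + toA m (d * e * q * derivative (p i)) * W i) := by
          refine Finset.sum_congr rfl fun i _ => ?_
          rw [hrel i, Finset.mul_sum]
          congr 1
          refine Finset.sum_congr rfl fun j _ => ?_
          simp only [toA, map_mul]
          ring
      _ = ∑ j, toA m (d * q * (∑ i, p i * M i j) + d * e * q * derivative (p j)) * W j := by
          rw [Finset.sum_add_distrib, Finset.sum_comm, ← Finset.sum_add_distrib]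
          refine Finset.sum_congr rfl fun j _ => ?_
          have hexp : toA m (d * q * (∑ i, p i * M i j) + d * e * q * derivative (p j))
              = (∑ i, toA m (d * q * (p i * M i j))) + toA m (d * e * q * derivative (p j)) := by
            simp only [toA, map_add, map_mul, map_sum, Finset.mul_sum]
          rw [hexp, add_mul, Finset.sum_mul]
  -- extract scalar identities via linear independence
  have hcj : ∀ j, q * q * hc j + d * e * derivative q * p j
      = d * q * (∑ i, p i * M i j) + d * e * q * derivative (p j) := by
    have hsum0 : ∑ j, ((algebraMap (Polynomial K) (RatFunc K))
          (q * q * hc j + d * e * derivative q * p j)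
        - (algebraMap (Polynomial K) (RatFunc K))
          (d * q * (∑ i, p i * M i j) + d * e * q * derivative (p j))) • W j = 0 := by
      simp only [sub_smul]
      rw [Finset.sum_sub_distrib, sub_eq_zero]
      simpa only [toA_smul] using E3
    intro j
    have hz := Fintype.linearIndependent_iff.mp hli _ hsum0 j
    exact RatFunc.algebraMap_injective K (sub_eq_zero.mp hz)
  -- basic nonvanishing facts at `a`
  have hea : (Polynomial.aeval a) e ≠ 0 := by
    obtain ⟨u, v, huv⟩ := hde
    intro h0
    have h1 := congrArg (Polynomial.aeval a) huv
    simp only [map_add, map_mul, map_one, hda, h0, mul_zero, add_zero, zero_add] at h1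
    exact one_ne_zero h1.symm
  have hmain : ∃ j, (Polynomial.aeval a) (hc j) ≠ 0 := by
    by_contra hall
    push_neg at hall
    have hintg : IsIntegral K a := Algebra.IsIntegral.isIntegral a
    exact (Polynomial.not_isUnit_of_natDegree_pos _ (minpoly.natDegree_pos hintg))
      (hhd _ (minpoly.dvd K a hda) fun i => minpoly.dvd K a (hall i))
  obtain ⟨j₀, hj₀⟩ := hmain
  -- pass to the algebraic closure
  set φ := algebraMap K (AlgebraicClosure K) with hφ
  have evmap : ∀ u : Polynomial K, (u.map φ).eval a = (Polynomial.aeval a) u := by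
    intro u
    rw [Polynomial.eval_map, hφ, Polynomial.aeval_def]
  have hda' : (d.map φ).eval a = 0 := by rw [evmap]; exact hda
  obtain ⟨d₁, hd₁eq⟩ : (X - C a) ∣ d.map φ := Polynomial.dvd_iff_isRoot.mpr hda'
  have hd₁a : d₁.eval a ≠ 0 := by
    intro h0
    have hsep : (d.map φ).Separable :=
      ((PerfectField.separable_iff_squarefree).mpr hdsqf).map
    have h2 : (X - C a) ∣ derivative (d.map φ) := by
      rw [hd₁eq, derivative_mul, derivative_X_sub_C]
      exact dvd_add (by rw [one_mul]; exact Polynomial.dvd_iff_isRoot.mpr h0)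
        (Dvd.intro _ rfl)
    exact Polynomial.not_isUnit_X_sub_C a
      (hsep.isUnit_of_dvd' ⟨d₁, hd₁eq⟩ h2)
  -- the mapped identity
  have hid : ∀ j, (q.map φ) ^ 2 * ((hc j).map φ) =
      ((X - C a) * d₁) * (e.map φ) *
        (derivative ((p j).map φ) * (q.map φ) - (p j).map φ * derivative (q.map φ))
      + ((X - C a) * d₁) * (q.map φ) * ∑ i, (p i).map φ * (M i j).map φ := by
    intro j
    have h1 := congrArg (Polynomial.map φ) (hcj j)
    simp only [Polynomial.map_add, Polynomial.map_mul, Polynomial.map_sum,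
      Polynomial.derivative_map] at h1
    rw [hd₁eq] at h1
    rw [Polynomial.derivative_map, Polynomial.derivative_map]
    linear_combination h1
  -- q vanishes at a
  have hQa : (q.map φ).eval a = 0 := by
    have h1 := congrArg (Polynomial.eval a) (hid j₀)
    simp only [Polynomial.eval_mul, Polynomial.eval_add, Polynomial.eval_sub,
      Polynomial.eval_pow, Polynomial.eval_X, Polynomial.eval_C, sub_self, zero_mul,
      add_zero, zero_add, mul_zero] at h1
    rcases mul_eq_zero.mp h1 with h3 | h3
    · exact pow_eq_zero_iff (two_ne_zero) |>.mp h3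
    · rw [evmap] at h3
      exact absurd h3 hj₀
  exact key_induction a (fun j => (hc j).map φ) (fun i j => (M i j).map φ) d₁ (e.map φ)
    hd₁a (by rw [evmap]; exact hea) j₀ (by rw [evmap]; exact hj₀)
    (Polynomial.rootMultiplicity a (q.map φ)) (fun i => (p i).map φ) (q.map φ)
    (Polynomial.map_ne_zero hq0) rfl hQa hid
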